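/- Let a, m be integers with a ≥ 1 and m ≥ 1, and let b be an integer. If there exists an integer N such that gcd(a·n − b, m) ≥ a for every integer n ≥ N, then a divides b and a divides m. -/

import Mathlib

/-- gcd is invariant under adding a multiple of the second argument. -/
lemma gcd_add_mul_aux (c m t : ℤ) : Int.gcd (c + m * t) m = Int.gcd c m := by
  apply Nat.dvd_antisymm
  · rw [← Int.natCast_dvd_natCast]
    apply Int.dvd_coe_gcd
    · have h1 : (Int.gcd (c + m * t) m : ℤ) ∣ (c + m * t) := Int.gcd_dvd_left _ _
      have h2 : (Int.gcd (c + m * t) m : ℤ) ∣ m := Int.gcd_dvd_right _ _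
      have := dvd_sub h1 (h2.mul_right t)
      simpa using this
    · exact Int.gcd_dvd_right _ _
  · rw [← Int.natCast_dvd_natCast]
    apply Int.dvd_coe_gcd
    · exact dvd_add (Int.gcd_dvd_left _ _) ((Int.gcd_dvd_right _ _).mul_right t)
    · exact Int.gcd_dvd_right _ _

/-- A residue coprime to `g'` lifts to one coprime to any multiple `M` of `g'`. -/
lemma lift_coprime_aux (M g' : ℕ) [NeZero M] (hg : g' ∣ M) (β : ℤ)
    (hco : Nat.Coprime g' β.natAbs) :
    ∃ c' : ℤ, Int.gcd c' (M : ℤ) = 1 ∧ (g' : ℤ) ∣ (β + c') := by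
  have hg'0 : NeZero g' := ⟨by rintro rfl; exact (NeZero.ne M) (eq_zero_of_zero_dvd hg)⟩
  have hu : IsUnit (-β : ZMod g') := by
    have h1 : IsUnit ((β.natAbs : ℕ) : ZMod g') := (ZMod.isUnit_iff_coprime _ _).2 hco.symm
    rcases Int.natAbs_eq β with hβ | hβ
    · rw [hβ, Int.cast_natCast]; exact h1.neg
    · rw [hβ, Int.cast_neg, Int.cast_natCast, neg_neg]; exact h1
  obtain ⟨u, hu'⟩ := hu
  obtain ⟨w, hw⟩ := ZMod.unitsMap_surjective hg u
  refine ⟨(((w : ZMod M).val : ℕ) : ℤ), ?_, ?_⟩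
  · rw [Int.gcd_natCast_natCast]
    exact ZMod.val_coe_unit_coprime w
  · rw [← ZMod.intCast_zmod_eq_zero_iff_dvd]
    have key : (((w : ZMod M).val : ℕ) : ZMod g') = -β := by
      have h2 : ((ZMod.unitsMap hg w : ZMod g')) = -β := by rw [hw, hu']
      rw [ZMod.natCast_val]
      rw [ZMod.unitsMap_def] at h2
      simpa [ZMod.castHom_apply] using h2
    push_cast
    rw [key]
    ring

/-- Let a, m be integers with a ≥ 1, m ≥ 1, and b an integer. If there exists
an integer N such that gcd(a·n − b, m) ≥ a for every integer n ≥ N, then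
a divides b and a divides m. -/
theorem stmt12 (a b m : ℤ) (ha : 1 ≤ a) (hm : 1 ≤ m)
    (h : ∃ N : ℤ, ∀ n : ℤ, N ≤ n → a ≤ (Int.gcd (a * n - b) m : ℤ)) :
    a ∣ b ∧ a ∣ m := by
  obtain ⟨N, hN⟩ := h
  have ha0 : a ≠ 0 := by positivity
  have hm0 : m ≠ 0 := by positivity
  set g : ℕ := Int.gcd a m with hgdef
  have hg0 : 0 < g := Int.gcd_pos_of_ne_zero_left m ha0
  have hga : (g : ℤ) ∣ a := Int.gcd_dvd_left _ _
  have hgm : (g : ℤ) ∣ m := Int.gcd_dvd_right _ _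
  set d : ℕ := Nat.gcd g b.natAbs with hddef
  have hd0 : 0 < d := Nat.gcd_pos_of_pos_left _ hg0
  have hd_g : d ∣ g := Nat.gcd_dvd_left _ _
  have hdb : (d : ℤ) ∣ b := by
    have := Int.natCast_dvd_natCast.mpr (Nat.gcd_dvd_right g b.natAbs)
    exact Int.dvd_natAbs.mp this
  obtain ⟨g', hgg'⟩ := hd_g
  obtain ⟨β, hb⟩ := hdb
  have hgmN : g ∣ m.natAbs := by
    exact Int.natCast_dvd_natCast.mp (Int.dvd_natAbs.mpr hgm)
  obtain ⟨M0, hM0⟩ : d ∣ m.natAbs := dvd_trans ⟨g', hgg'⟩ hgmN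
  have hM00 : M0 ≠ 0 := by
    rintro rfl
    simp only [Nat.mul_zero] at hM0
    exact hm0 (Int.natAbs_eq_zero.mp hM0)
  haveI : NeZero M0 := ⟨hM00⟩
  have hg'M : g' ∣ M0 := by
    have : d * g' ∣ d * M0 := by rw [← hgg', ← hM0]; exact hgmN
    exact (Nat.mul_dvd_mul_iff_left hd0).mp this
  have hco : Nat.Coprime g' β.natAbs := by
    have h1 := Nat.coprime_div_gcd_div_gcd (m := g) (n := b.natAbs) hd0
    have h2 : g / d = g' := by rw [hgg']; exact Nat.mul_div_cancel_left _ hd0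
    have h3 : b.natAbs / d = β.natAbs := by
      have : b.natAbs = d * β.natAbs := by
        rw [hb, Int.natAbs_mul]; simp
      rw [this]; exact Nat.mul_div_cancel_left _ hd0
    rwa [h2, h3] at h1
  obtain ⟨c', hc'1, hc'2⟩ := lift_coprime_aux M0 g' hg'M β hco
  -- solve a * n ≡ b + d * c' (mod m)
  have hgsum : (g : ℤ) ∣ (b + (d : ℤ) * c') := by
    have : (g : ℤ) = (d : ℤ) * (g' : ℤ) := by rw [hgg']; push_cast; ring
    rw [this, hb, ← mul_add]
    exact mul_dvd_mul_left _ hc'2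
  obtain ⟨e, he⟩ := hgsum
  have hbezout := Int.gcd_eq_gcd_ab a m
  set A := Int.gcdA a m
  set B := Int.gcdB a m
  set n0 : ℤ := e * A with hn0
  set s : ℤ := max (N - n0) 0 with hsdef
  set n : ℤ := n0 + m * s with hndef
  have hnN : N ≤ n := by
    have hs0 : 0 ≤ s := le_max_right _ _
    have : s ≤ m * s := le_mul_of_one_le_left hs0 hm
    have h2 : N - n0 ≤ s := le_max_left _ _
    simp only [hndef]; linarith
  have hval : a * n - b = (d : ℤ) * c' + m * (a * s - e * B) := by
    have : a * n0 - b = (d : ℤ) * c' + m * (-(e * B)) := by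
      have h1 : a * A = (g : ℤ) - m * B := by linarith [hbezout]
      calc a * n0 - b = (a * A) * e - b := by rw [hn0]; ring
        _ = ((g : ℤ) - m * B) * e - b := by rw [h1]
        _ = ((g : ℤ) * e) - b - m * (e * B) := by ring
        _ = (b + (d : ℤ) * c') - b - m * (e * B) := by rw [← he]
        _ = (d : ℤ) * c' + m * (-(e * B)) := by ring
    calc a * n - b = (a * n0 - b) + m * (a * s) := by rw [hndef]; ring
      _ = (d : ℤ) * c' + m * (a * s - e * B) := by rw [this]; ring
  have hgcd : Int.gcd (a * n - b) m = d := by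
    rw [hval, gcd_add_mul_aux]
    have hmval : m = (d : ℤ) * (M0 : ℤ) := by
      have := Int.natAbs_of_nonneg (le_of_lt (by linarith : (0:ℤ) < m))
      rw [← this, hM0]; push_cast; ring
    rw [hmval, Int.gcd_mul_left, hc'1]
    simp
  have had : a ≤ (d : ℤ) := by
    have := hN n hnN
    rwa [hgcd] at this
  have hda : (d : ℤ) ∣ a := dvd_trans (by exact_mod_cast Int.natCast_dvd_natCast.mpr (⟨g', hgg'⟩ : d ∣ g)) hga
  have hd_le : (d : ℤ) ≤ a := Int.le_of_dvd (by linarith) hda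
  have heq : (d : ℤ) = a := le_antisymm hd_le had
  constructor
  · rw [← heq, hb]; exact Dvd.intro β rfl
  · rw [← heq]
    exact dvd_trans (Int.natCast_dvd_natCast.mpr ⟨g', hgg'⟩) hgm
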